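/- (Plemelj-type limit used for the critical-layer jump formula, equations (4.13)–(4.16).) Let a < b be real numbers, let h : [a, b] → ℝ be continuous, let V : [a, b] → ℝ be continuously differentiable, and let c₀ ∈ ℝ be such that V − c₀ has exactly N ≥ 0 zeros y₁ < ⋯ < y_N, all lying in the open interval (a, b), with V′(y_j) ≠ 0 for each j. Then lim_{ε→0+} ∫_a^b ε·h(y)/((V(y) − c₀)² + ε²) dy = π · Σ_{j=1}^N h(y_j)/|V′(y_j)|. -/

import Mathlib

open Set Filter Real MeasureTheory

noncomputable section


lemma arctan_tendsto_pos (c : ℝ) (hc : 0 < c) :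
    Tendsto (fun ε : ℝ => Real.arctan (c / ε)) (nhdsWithin 0 (Ioi 0)) (nhds (π/2)) := by
  have h1 : Tendsto (fun ε : ℝ => c / ε) (nhdsWithin 0 (Ioi 0)) atTop := by
    simpa [div_eq_mul_inv] using (tendsto_inv_nhdsGT_zero.const_mul_atTop hc)
  exact (Real.tendsto_arctan_atTop.mono_right nhdsWithin_le_nhds).comp h1

lemma arctan_tendsto_neg (c : ℝ) (hc : c < 0) :
    Tendsto (fun ε : ℝ => Real.arctan (c / ε)) (nhdsWithin 0 (Ioi 0)) (nhds (-(π/2))) := by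
  have := (arctan_tendsto_pos (-c) (by linarith)).neg
  simp only [← Real.arctan_neg, neg_div, neg_neg] at this ⊢
  exact this

lemma kernel_hasDeriv (g g' : ℝ → ℝ) (x ε : ℝ) (hε : 0 < ε)
    (hg : HasDerivAt g (g' x) x) :
    HasDerivAt (fun z => Real.arctan (g z / ε)) (ε * g' x / ((g x)^2 + ε^2)) x := by
  have h1 : HasDerivAt (fun z => g z / ε) (g' x / ε) x := hg.div_const ε
  have h2 := h1.arctan
  convert h2 using 1
  have hε2 : (0:ℝ) < (g x)^2 + ε^2 := by positivity
  field_simp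
  ring

lemma plemelj_local (p q y₀ : ℝ) (hpy : p < y₀) (hyq : y₀ < q)
    (f : ℝ → ℝ) (hf : ContinuousOn f (Icc p q))
    (g g' : ℝ → ℝ) (hg : ∀ x ∈ Icc p q, HasDerivAt g (g' x) x)
    (hg'c : ContinuousOn g' (Icc p q)) (hg'pos : ∀ x ∈ Icc p q, 0 < g' x)
    (hgy : g y₀ = 0) :
    Tendsto (fun ε : ℝ => ∫ x in p..q, ε * f x / ((g x)^2 + ε^2)) (nhdsWithin 0 (Ioi 0))
      (nhds (π * (f y₀ / g' y₀))) := by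
  have hpq : p ≤ q := le_of_lt (hpy.trans hyq)
  have hy₀ : y₀ ∈ Icc p q := ⟨hpy.le, hyq.le⟩
  have hp : p ∈ Icc p q := ⟨le_refl _, hpq⟩
  have hq : q ∈ Icc p q := ⟨hpq, le_refl _⟩
  have contg : ContinuousOn g (Icc p q) := fun x hx =>
    (hg x hx).continuousAt.continuousWithinAt
  set F : ℝ → ℝ := fun x => f x / g' x with hF_def
  have hF : ContinuousOn F (Icc p q) :=
    hf.div hg'c (fun x hx => (hg'pos x hx).ne')
  -- strict monotonicity of g
  have mono : StrictMonoOn g (Icc p q) := by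
    apply strictMonoOn_of_deriv_pos (convex_Icc p q) contg
    intro x hx
    rw [interior_Icc] at hx
    rw [(hg x (Ioo_subset_Icc_self hx)).deriv]
    exact hg'pos x (Ioo_subset_Icc_self hx)
  have gneg : ∀ x ∈ Icc p q, x < y₀ → g x < 0 := fun x hx hxy => by
    have := mono hx hy₀ hxy; rwa [hgy] at this
  have gpos : ∀ x ∈ Icc p q, y₀ < x → 0 < g x := fun x hx hxy => by
    have := mono hy₀ hx hxy; rwa [hgy] at this
  set K : ℝ → ℝ → ℝ := fun ε x => ε * g' x / ((g x)^2 + ε^2) with hK_def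
  have hKcont : ∀ ε : ℝ, 0 < ε → ContinuousOn (K ε) (Icc p q) := by
    intro ε hε
    exact (continuousOn_const.mul hg'c).div
      (((contg.pow 2).add continuousOn_const))
      (fun x hx => by positivity)
  have hKnn : ∀ ε : ℝ, 0 < ε → ∀ x ∈ Icc p q, 0 ≤ K ε x := by
    intro ε hε x hx
    have := (hg'pos x hx).le
    positivity
  have integK : ∀ ε : ℝ, 0 < ε → ∀ φ : ℝ → ℝ, ContinuousOn φ (Icc p q) →
      ∀ s t, s ∈ Icc p q → t ∈ Icc p q →
      IntervalIntegrable (fun x => φ x * K ε x) volume s t := by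
    intro ε hε φ hφ s t hs ht
    exact ((hφ.mul (hKcont ε hε)).mono (Set.uIcc_subset_Icc hs ht)).intervalIntegrable
  have ftc : ∀ ε : ℝ, 0 < ε → ∀ s t, s ∈ Icc p q → t ∈ Icc p q →
      ∫ x in s..t, K ε x = Real.arctan (g t / ε) - Real.arctan (g s / ε) := by
    intro ε hε s t hs ht
    apply intervalIntegral.integral_eq_sub_of_hasDerivAt
    · intro x hx
      exact kernel_hasDeriv g g' x ε hε (hg x (Set.uIcc_subset_Icc hs ht hx))
    · have := integK ε hε (fun _ => (1:ℝ)) continuousOn_const s t hs ht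
      simpa using this
  have key_bound : ∀ ε : ℝ, 0 < ε → ∀ φ : ℝ → ℝ, ContinuousOn φ (Icc p q) →
      ∀ c : ℝ, 0 ≤ c → ∀ s t, s ∈ Icc p q → t ∈ Icc p q → s ≤ t →
      (∀ x ∈ Icc s t, |φ x| ≤ c) →
      |∫ x in s..t, φ x * K ε x| ≤ c * (Real.arctan (g t / ε) - Real.arctan (g s / ε)) := by
    intro ε hε φ hφ c hc s t hs ht hst hb
    have hsub : Icc s t ⊆ Icc p q := Icc_subset_Icc hs.1 ht.2
    have h1 : |∫ x in s..t, φ x * K ε x| ≤ ∫ x in s..t, |φ x * K ε x| :=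
      intervalIntegral.abs_integral_le_integral_abs hst
    have h2 : ∫ x in s..t, |φ x * K ε x| ≤ ∫ x in s..t, c * K ε x := by
      apply intervalIntegral.integral_mono_on hst
      · exact (integK ε hε φ hφ s t hs ht).abs
      · exact integK ε hε (fun _ => c) continuousOn_const s t hs ht
      · intro x hx
        rw [abs_mul, abs_of_nonneg (hKnn ε hε x (hsub hx))]
        exact mul_le_mul_of_nonneg_right (hb x hx) (hKnn ε hε x (hsub hx))
    have h3 : ∫ x in s..t, c * K ε x = c * (Real.arctan (g t / ε) - Real.arctan (g s / ε)) := by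
      rw [intervalIntegral.integral_const_mul, ftc ε hε s t hs ht]
    linarith [h1, h2, h3.le]
  -- decomposition
  have hdecomp : ∀ ε ∈ Ioi (0:ℝ),
      (∫ x in p..q, ε * f x / ((g x)^2 + ε^2)) =
      (∫ x in p..q, (F x - F y₀) * K ε x) + F y₀ * ∫ x in p..q, (1:ℝ) * K ε x := by
    intro ε hε
    rw [mem_Ioi] at hε
    have e1 : ∫ x in p..q, ε * f x / ((g x)^2 + ε^2) =
        ∫ x in p..q, ((F x - F y₀) * K ε x + F y₀ * (1 * K ε x)) := by
      apply intervalIntegral.integral_congr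
      intro x hx
      rw [Set.uIcc_of_le hpq] at hx
      have hg'ne : g' x ≠ 0 := (hg'pos x hx).ne'
      have hd : (g x)^2 + ε^2 ≠ 0 := by positivity
      show ε * f x / (g x ^ 2 + ε ^ 2) = (F x - F y₀) * K ε x + F y₀ * (1 * K ε x)
      have e2 : (F x - F y₀) * K ε x + F y₀ * (1 * K ε x) = F x * K ε x := by ring
      rw [e2]
      simp only [hF_def, hK_def]
      field_simp
    rw [e1, intervalIntegral.integral_add
      (integK ε hε (fun x => F x - F y₀) (hF.sub continuousOn_const) p q hp hq)
      (by simpa [mul_assoc] using (integK ε hε (fun _ => F y₀ * 1) continuousOn_const p q hp hq)),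
      intervalIntegral.integral_const_mul]
  -- limit of total mass
  have hB : Tendsto (fun ε : ℝ => ∫ x in p..q, (1:ℝ) * K ε x) (nhdsWithin 0 (Ioi 0)) (nhds π) := by
    have harctan : Tendsto (fun ε : ℝ => Real.arctan (g q / ε) - Real.arctan (g p / ε))
        (nhdsWithin 0 (Ioi 0)) (nhds π) := by
      have h2 := (arctan_tendsto_pos (g q) (gpos q hq hyq)).sub
        (arctan_tendsto_neg (g p) (gneg p hp hpy))
      have e : π/2 - -(π/2) = π := by ring
      rwa [e] at h2
    apply harctan.congr'
    filter_upwards [self_mem_nhdsWithin] with ε hε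
    rw [mem_Ioi] at hε
    simp only [one_mul]
    rw [ftc ε hε p q hp hq]
  -- limit of the oscillation term
  have hA : Tendsto (fun ε : ℝ => ∫ x in p..q, (F x - F y₀) * K ε x)
      (nhdsWithin 0 (Ioi 0)) (nhds 0) := by
    rw [NormedAddCommGroup.tendsto_nhds_zero]
    intro ζ hζ
    obtain ⟨C, hC⟩ := isCompact_Icc.exists_bound_of_continuousOn hF
    set M : ℝ := 2 * C + 1 with hM_def
    have hCnn : 0 ≤ C := le_trans (norm_nonneg (F p)) (hC p hp)
    have hMpos : 0 < M := by linarith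
    have hM : ∀ x ∈ Icc p q, |F x - F y₀| ≤ M := by
      intro x hx
      have h1 := hC x hx
      have h2 := hC y₀ hy₀
      rw [Real.norm_eq_abs] at h1 h2
      calc |F x - F y₀| ≤ |F x| + |F y₀| := abs_sub _ _
        _ ≤ M := by linarith
    set ζ' : ℝ := ζ / (2 * π + 2) with hζ'_def
    have hζ'pos : 0 < ζ' := div_pos hζ (by linarith [pi_pos])
    have hcont := hF y₀ hy₀
    rw [Metric.continuousWithinAt_iff] at hcont
    obtain ⟨η, hηpos, hη⟩ := hcont ζ' hζ'pos
    set s : ℝ := max p (y₀ - η/2) with hs_def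
    set t : ℝ := min q (y₀ + η/2) with ht_def
    have hps : p ≤ s := le_max_left _ _
    have hsy : s < y₀ := max_lt hpy (by linarith)
    have hyt : y₀ < t := lt_min hyq (by linarith)
    have htq : t ≤ q := min_le_left _ _
    have hs : s ∈ Icc p q := ⟨hps, le_trans hsy.le hyq.le⟩
    have ht : t ∈ Icc p q := ⟨le_trans hpy.le hyt.le, htq⟩
    have hst : s ≤ t := le_trans hsy.le hyt.le
    have hmid : ∀ x ∈ Icc s t, |F x - F y₀| ≤ ζ' := by
      intro x hx
      have hx' : x ∈ Icc p q := Icc_subset_Icc hs.1 ht.2 hx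
      have hd : dist x y₀ < η := by
        rw [Real.dist_eq, abs_lt]
        constructor
        · have := le_trans (le_max_right p (y₀ - η/2)) hx.1
          linarith
        · have := le_trans hx.2 (min_le_right q (y₀ + η/2))
          linarith
      have := hη hx' hd
      rw [Real.dist_eq] at this
      exact this.le
    -- outer pieces tend to zero
    have houtR : Tendsto (fun ε : ℝ => ∫ x in t..q, (F x - F y₀) * K ε x)
        (nhdsWithin 0 (Ioi 0)) (nhds 0) := by
      apply squeeze_zero_norm'
        (a := fun ε => M * (Real.arctan (g q / ε) - Real.arctan (g t / ε)))
      · filter_upwards [self_mem_nhdsWithin] with ε hε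
        rw [mem_Ioi] at hε
        rw [Real.norm_eq_abs]
        exact key_bound ε hε _ (hF.sub continuousOn_const) M hMpos.le t q ht hq htq
          (fun x hx => hM x (Icc_subset_Icc ht.1 hq.2 hx))
      · have h2 := ((arctan_tendsto_pos (g q) (gpos q hq hyq)).sub
          (arctan_tendsto_pos (g t) (gpos t ht hyt))).const_mul M
        simpa using h2
    have houtL : Tendsto (fun ε : ℝ => ∫ x in p..s, (F x - F y₀) * K ε x)
        (nhdsWithin 0 (Ioi 0)) (nhds 0) := by
      apply squeeze_zero_norm'
        (a := fun ε => M * (Real.arctan (g s / ε) - Real.arctan (g p / ε)))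
      · filter_upwards [self_mem_nhdsWithin] with ε hε
        rw [mem_Ioi] at hε
        rw [Real.norm_eq_abs]
        exact key_bound ε hε _ (hF.sub continuousOn_const) M hMpos.le p s hp hs hps
          (fun x hx => hM x (Icc_subset_Icc hp.1 hs.2 hx))
      · have h2 := ((arctan_tendsto_neg (g s) (gneg s hs hsy)).sub
          (arctan_tendsto_neg (g p) (gneg p hp hpy))).const_mul M
        simpa using h2
    have hRsmall := (NormedAddCommGroup.tendsto_nhds_zero.mp houtR) (ζ/4) (by linarith)
    have hLsmall := (NormedAddCommGroup.tendsto_nhds_zero.mp houtL) (ζ/4) (by linarith)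
    filter_upwards [self_mem_nhdsWithin, hRsmall, hLsmall] with ε hε hR hL
    rw [mem_Ioi] at hε
    rw [Real.norm_eq_abs] at hR hL ⊢
    have hsplit : (∫ x in p..q, (F x - F y₀) * K ε x) =
        (∫ x in p..s, (F x - F y₀) * K ε x) + (∫ x in s..t, (F x - F y₀) * K ε x)
          + (∫ x in t..q, (F x - F y₀) * K ε x) := by
      rw [intervalIntegral.integral_add_adjacent_intervals
          (integK ε hε (fun x => F x - F y₀) (hF.sub continuousOn_const) p s hp hs)
          (integK ε hε (fun x => F x - F y₀) (hF.sub continuousOn_const) s t hs ht),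
        intervalIntegral.integral_add_adjacent_intervals
          (integK ε hε (fun x => F x - F y₀) (hF.sub continuousOn_const) p t hp ht)
          (integK ε hε (fun x => F x - F y₀) (hF.sub continuousOn_const) t q ht hq)]
    have hmidb : |∫ x in s..t, (F x - F y₀) * K ε x| ≤ ζ' * π := by
      have h1 := key_bound ε hε _ (hF.sub continuousOn_const) ζ' hζ'pos.le s t hs ht hst hmid
      have h2 : Real.arctan (g t / ε) - Real.arctan (g s / ε) ≤ π := by
        have := Real.arctan_lt_pi_div_two (g t / ε)
        have := Real.neg_pi_div_two_lt_arctan (g s / ε)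
        linarith
      calc |∫ x in s..t, (F x - F y₀) * K ε x|
          ≤ ζ' * (Real.arctan (g t / ε) - Real.arctan (g s / ε)) := h1
        _ ≤ ζ' * π := by
            apply mul_le_mul_of_nonneg_left h2 hζ'pos.le
    have hζ'π : ζ' * π < ζ / 2 := by
      rw [hζ'_def, div_mul_eq_mul_div, div_lt_iff₀ (by linarith [pi_pos])]
      nlinarith [pi_pos, hζ]
    rw [hsplit]
    calc |(∫ x in p..s, (F x - F y₀) * K ε x) + (∫ x in s..t, (F x - F y₀) * K ε x)
          + (∫ x in t..q, (F x - F y₀) * K ε x)|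
        ≤ |∫ x in p..s, (F x - F y₀) * K ε x| + |∫ x in s..t, (F x - F y₀) * K ε x|
          + |∫ x in t..q, (F x - F y₀) * K ε x| := by
          exact (abs_add_le _ _).trans (by gcongr; exact abs_add_le _ _)
      _ < ζ := by linarith
  -- combine
  have hfinal := hA.add (hB.const_mul (F y₀))
  rw [zero_add] at hfinal
  have e : F y₀ * π = π * (f y₀ / g' y₀) := by rw [hF_def]; ring
  rw [e] at hfinal
  apply hfinal.congr'
  filter_upwards [self_mem_nhdsWithin] with ε hε
  exact (hdecomp ε hε).symm

lemma plemelj_local_neg (p q y₀ : ℝ) (hpy : p < y₀) (hyq : y₀ < q)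
    (f : ℝ → ℝ) (hf : ContinuousOn f (Icc p q))
    (g g' : ℝ → ℝ) (hg : ∀ x ∈ Icc p q, HasDerivAt g (g' x) x)
    (hg'c : ContinuousOn g' (Icc p q)) (hg'neg : ∀ x ∈ Icc p q, g' x < 0)
    (hgy : g y₀ = 0) :
    Tendsto (fun ε : ℝ => ∫ x in p..q, ε * f x / ((g x)^2 + ε^2)) (nhdsWithin 0 (Ioi 0))
      (nhds (π * (f y₀ / (-g' y₀)))) := by
  have h1 := plemelj_local p q y₀ hpy hyq f hf (fun x => -(g x)) (fun x => -(g' x))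
    (fun x hx => (hg x hx).neg) hg'c.neg (fun x hx => by simpa using neg_pos.mpr (hg'neg x hx))
    (by simp [hgy])
  simpa [neg_sq] using h1

open intervalIntegral in
/-- Plemelj-type limit (equations (4.13)–(4.16)): if `V − c₀` has exactly the simple
zeros `y 0 < ⋯ < y (N−1)`, all interior to `[a, b]`, then
`∫_a^b ε h/((V − c₀)² + ε²) → π ∑ⱼ h(yⱼ)/|V'(yⱼ)|` as `ε → 0⁺`. -/
theorem plemelj_limit
    (a b : ℝ) (hab : a < b)
    (h : ℝ → ℝ) (hh : ContinuousOn h (Icc a b))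
    (V V' : ℝ → ℝ)
    (hV' : ∀ x ∈ Icc a b, HasDerivAt V (V' x) x)
    (hV'c : ContinuousOn V' (Icc a b))
    (c₀ : ℝ) (N : ℕ)
    (y : Fin N → ℝ) (hymono : StrictMono y)
    (hyin : ∀ j, y j ∈ Ioo a b)
    (hyzero : ∀ j, V (y j) = c₀)
    (hyall : ∀ x ∈ Icc a b, V x = c₀ → ∃ j, x = y j)
    (hysimple : ∀ j, V' (y j) ≠ 0) :
    Filter.Tendsto
      (fun ε : ℝ => ∫ x in a..b, ε * h x / ((V x - c₀)^2 + ε^2))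
      (nhdsWithin 0 (Ioi 0))
      (nhds (Real.pi * ∑ j : Fin N, h (y j) / |V' (y j)|)) := by
  set g : ℝ → ℝ := fun x => V x - c₀ with hg_def
  have hyIcc : ∀ j, y j ∈ Icc a b := fun j => Ioo_subset_Icc_self (hyin j)
  have hgd : ∀ x ∈ Icc a b, HasDerivAt g (V' x) x := fun x hx => (hV' x hx).sub_const c₀
  have contg : ContinuousOn g (Icc a b) := fun x hx => (hgd x hx).continuousAt.continuousWithinAt
  have hgy : ∀ j, g (y j) = 0 := fun j => by simp [hg_def, hyzero j]
  -- radii where V' keeps its sign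
  have hρ : ∀ j : Fin N, ∃ ρ > 0, ∀ x ∈ Icc a b, dist x (y j) < ρ →
      |V' x - V' (y j)| < |V' (y j)| := by
    intro j
    have hcont := hV'c (y j) (hyIcc j)
    rw [Metric.continuousWithinAt_iff] at hcont
    obtain ⟨ρ, hρpos, hρ⟩ := hcont |V' (y j)| (abs_pos.mpr (hysimple j))
    exact ⟨ρ, hρpos, fun x hx hd => by have := hρ hx hd; rwa [Real.dist_eq] at this⟩
  choose ρ hρpos hρsign using hρ
  -- choose δ
  obtain ⟨δ, hδpos, hδin, hδsep, hδρ⟩ : ∃ δ : ℝ, 0 < δ ∧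
      (∀ j, a < y j - δ ∧ y j + δ < b) ∧
      (∀ i j : Fin N, i < j → y i + δ < y j - δ) ∧ (∀ j, δ < ρ j) := by
    have E1 : ∀ᶠ δ in nhdsWithin (0:ℝ) (Ioi 0), ∀ j, a < y j - δ ∧ y j + δ < b := by
      rw [eventually_all]
      intro j
      apply Filter.Eventually.filter_mono nhdsWithin_le_nhds
      have h1 : ∀ᶠ δ in nhds (0:ℝ), δ < y j - a := eventually_lt_nhds (by linarith [(hyin j).1])
      have h2 : ∀ᶠ δ in nhds (0:ℝ), δ < b - y j := eventually_lt_nhds (by linarith [(hyin j).2])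
      filter_upwards [h1, h2] with δ hd1 hd2
      constructor <;> linarith
    have E2 : ∀ᶠ δ in nhdsWithin (0:ℝ) (Ioi 0), ∀ i j : Fin N, i < j → y i + δ < y j - δ := by
      rw [eventually_all]
      intro i
      rw [eventually_all]
      intro j
      by_cases hij : i < j
      · apply Filter.Eventually.filter_mono nhdsWithin_le_nhds
        have h1 : ∀ᶠ δ in nhds (0:ℝ), δ < (y j - y i)/2 :=
          eventually_lt_nhds (by have := hymono hij; linarith)
        filter_upwards [h1] with δ hd1
        intro _
        linarith
      · exact Filter.Eventually.of_forall (fun _ h' => absurd h' hij)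
    have E3 : ∀ᶠ δ in nhdsWithin (0:ℝ) (Ioi 0), ∀ j, δ < ρ j := by
      rw [eventually_all]
      intro j
      exact Filter.Eventually.filter_mono nhdsWithin_le_nhds (eventually_lt_nhds (hρpos j))
    have E0 : ∀ᶠ δ in nhdsWithin (0:ℝ) (Ioi 0), 0 < δ := self_mem_nhdsWithin
    obtain ⟨δ, h0, h1, h2, h3⟩ := (E0.and (E1.and (E2.and E3))).exists
    exact ⟨δ, h0, h1, h2, h3⟩
  have hIccsub : ∀ j, Icc (y j - δ) (y j + δ) ⊆ Icc a b := fun j =>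
    Icc_subset_Icc (hδin j).1.le (hδin j).2.le
  -- sign of V' on the local intervals
  have hsign : ∀ j, ∀ x ∈ Icc (y j - δ) (y j + δ), |V' x - V' (y j)| < |V' (y j)| := by
    intro j x hx
    apply hρsign j x (hIccsub j hx)
    rw [Real.dist_eq, abs_lt]
    obtain ⟨h1, h2⟩ := hx
    constructor <;> [linarith [hδρ j]; linarith [hδρ j]]
  -- local limits
  have hloc : ∀ j : Fin N, Tendsto
      (fun ε : ℝ => ∫ x in (y j - δ)..(y j + δ), ε * h x / ((g x)^2 + ε^2))
      (nhdsWithin 0 (Ioi 0)) (nhds (π * (h (y j) / |V' (y j)|))) := by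
    intro j
    have hpy : y j - δ < y j := by linarith
    have hyq : y j < y j + δ := by linarith
    have hfc : ContinuousOn h (Icc (y j - δ) (y j + δ)) := hh.mono (hIccsub j)
    have hgdl : ∀ x ∈ Icc (y j - δ) (y j + δ), HasDerivAt g (V' x) x :=
      fun x hx => hgd x (hIccsub j hx)
    have hV'cl : ContinuousOn V' (Icc (y j - δ) (y j + δ)) := hV'c.mono (hIccsub j)
    rcases (hysimple j).lt_or_gt with hneg | hpos
    · have hall : ∀ x ∈ Icc (y j - δ) (y j + δ), V' x < 0 := by
        intro x hx
        have := hsign j x hx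
        rw [abs_lt] at this
        rw [abs_of_neg hneg] at this
        linarith [this.2]
      have := plemelj_local_neg _ _ _ hpy hyq h hfc g V' hgdl hV'cl hall (hgy j)
      rwa [show -V' (y j) = |V' (y j)| from (abs_of_neg hneg).symm] at this
    · have hall : ∀ x ∈ Icc (y j - δ) (y j + δ), 0 < V' x := by
        intro x hx
        have := hsign j x hx
        rw [abs_lt] at this
        rw [abs_of_pos hpos] at this
        linarith [this.1]
      have := plemelj_local _ _ _ hpy hyq h hfc g V' hgdl hV'cl hall (hgy j)
      rwa [show V' (y j) = |V' (y j)| from (abs_of_pos hpos).symm] at this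
  -- the remainder set
  set U : Set ℝ := ⋃ j : Fin N, Ioo (y j - δ) (y j + δ) with hU_def
  have hUopen : IsOpen U := isOpen_iUnion fun j => isOpen_Ioo
  have hUsub : U ⊆ Icc a b := by
    apply iUnion_subset
    intro j
    exact subset_trans Ioo_subset_Icc_self (hIccsub j)
  set S : Set ℝ := Icc a b \ U with hS_def
  have hScompact : IsCompact S := isCompact_Icc.diff hUopen
  have hSsub : S ⊆ Icc a b := diff_subset
  have haS : a ∈ S := by
    constructor
    · exact ⟨le_refl a, hab.le⟩
    · intro haU
      rw [hU_def, mem_iUnion] at haU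
      obtain ⟨j, hj⟩ := haU
      linarith [hj.1, (hδin j).1]
  -- minimum of |g| on S
  obtain ⟨x₀, hx₀S, hx₀min⟩ := hScompact.exists_isMinOn ⟨a, haS⟩
    ((contg.mono hSsub).abs)
  set m : ℝ := |g x₀| with hm_def
  have hmpos : 0 < m := by
    rw [hm_def, abs_pos]
    intro hgx₀
    have hVx₀ : V x₀ = c₀ := by
      have : V x₀ - c₀ = 0 := hgx₀
      linarith
    obtain ⟨j, rfl⟩ := hyall x₀ (hSsub hx₀S) hVx₀
    exact hx₀S.2 (mem_iUnion.mpr ⟨j, ⟨by linarith, by linarith⟩⟩)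
  have hmle : ∀ x ∈ S, m ≤ |g x| := fun x hx => hx₀min hx
  -- bound on h
  obtain ⟨C, hC⟩ := isCompact_Icc.exists_bound_of_continuousOn hh
  have hCnn : 0 ≤ C := le_trans (norm_nonneg _) (hC a ⟨le_refl a, hab.le⟩)
  -- integrability and decomposition for ε > 0
  have hpair : Pairwise (Function.onFun Disjoint fun j : Fin N => Ioo (y j - δ) (y j + δ)) := by
    intro i j hij
    rw [Function.onFun, Set.disjoint_left]
    intro x hxi hxj
    rcases hij.lt_or_gt with hlt | hlt
    · have := hδsep i j hlt; obtain ⟨h1, h2⟩ := hxi; obtain ⟨h3, h4⟩ := hxj; linarith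
    · have := hδsep j i hlt; obtain ⟨h1, h2⟩ := hxi; obtain ⟨h3, h4⟩ := hxj; linarith
  have hSmeas : MeasurableSet S := measurableSet_Icc.diff hUopen.measurableSet
  have hcontf : ∀ ε : ℝ, 0 < ε →
      ContinuousOn (fun x => ε * h x / ((g x)^2 + ε^2)) (Icc a b) := by
    intro ε hε
    exact (continuousOn_const.mul hh).div ((contg.pow 2).add continuousOn_const)
      (fun x hx => by positivity)
  have hdecomp : ∀ ε : ℝ, 0 < ε →
      (∫ x in a..b, ε * h x / ((g x)^2 + ε^2)) =
      (∫ x in S, ε * h x / ((g x)^2 + ε^2)) +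
      ∑ j : Fin N, ∫ x in (y j - δ)..(y j + δ), ε * h x / ((g x)^2 + ε^2) := by
    intro ε hε
    have hcont := hcontf ε hε
    have hint : IntegrableOn (fun x => ε * h x / ((g x)^2 + ε^2)) (Icc a b) volume :=
      hcont.integrableOn_compact isCompact_Icc
    have e1 : (∫ x in a..b, ε * h x / ((g x)^2 + ε^2)) =
        ∫ x in Icc a b, ε * h x / ((g x)^2 + ε^2) := by
      rw [intervalIntegral.integral_of_le hab.le, MeasureTheory.integral_Icc_eq_integral_Ioc]
    have e2 : (Icc a b : Set ℝ) = S ∪ U := (Set.diff_union_of_subset hUsub).symm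
    have e3 : (∫ x in Icc a b, ε * h x / ((g x)^2 + ε^2)) =
        (∫ x in S, ε * h x / ((g x)^2 + ε^2)) + ∫ x in U, ε * h x / ((g x)^2 + ε^2) := by
      rw [e2]
      apply MeasureTheory.setIntegral_union
      · exact disjoint_sdiff_left.mono_left (le_refl _)
      · exact hUopen.measurableSet
      · exact hint.mono_set (e2 ▸ subset_union_left)
      · exact hint.mono_set hUsub
    have e4 : (∫ x in U, ε * h x / ((g x)^2 + ε^2)) =
        ∑ j : Fin N, ∫ x in Ioo (y j - δ) (y j + δ), ε * h x / ((g x)^2 + ε^2) := by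
      rw [hU_def, MeasureTheory.integral_iUnion (fun j => measurableSet_Ioo) hpair
        (hint.mono_set hUsub)]
      exact tsum_fintype _
    have e5 : ∀ j : Fin N, (∫ x in Ioo (y j - δ) (y j + δ), ε * h x / ((g x)^2 + ε^2)) =
        ∫ x in (y j - δ)..(y j + δ), ε * h x / ((g x)^2 + ε^2) := by
      intro j
      rw [intervalIntegral.integral_of_le (by linarith : y j - δ ≤ y j + δ),
        MeasureTheory.integral_Ioc_eq_integral_Ioo]
    rw [e1, e3, e4]
    congr 1
    exact Finset.sum_congr rfl fun j _ => e5 j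
  -- the remainder integral tends to zero
  have hS0 : Tendsto (fun ε : ℝ => ∫ x in S, ε * h x / ((g x)^2 + ε^2))
      (nhdsWithin 0 (Ioi 0)) (nhds 0) := by
    have hSfin : volume S < ⊤ :=
      lt_of_le_of_lt (measure_mono hSsub) measure_Icc_lt_top
    apply squeeze_zero_norm' (a := fun ε => C / m^2 * (volume S).toReal * ε)
    · filter_upwards [self_mem_nhdsWithin] with ε hε
      rw [mem_Ioi] at hε
      have hb : ∀ x ∈ S, ‖ε * h x / ((g x)^2 + ε^2)‖ ≤ ε * C / m^2 := by
        intro x hx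
        have hden : m^2 ≤ (g x)^2 + ε^2 := by
          have h1 := hmle x hx
          have h2 : m^2 ≤ (g x)^2 := by
            rw [← sq_abs (g x)]
            exact pow_le_pow_left₀ hmpos.le h1 2
          nlinarith
        have hdpos : (0:ℝ) < (g x)^2 + ε^2 := by positivity
        rw [Real.norm_eq_abs, abs_div, abs_mul, abs_of_pos hε]
        rw [abs_of_pos hdpos]
        have hhx : |h x| ≤ C := by
          have := hC x (hSsub hx); rwa [Real.norm_eq_abs] at this
        calc ε * |h x| / ((g x)^2 + ε^2) ≤ ε * C / ((g x)^2 + ε^2) := by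
              gcongr
          _ ≤ ε * C / m^2 := by
              gcongr
      have := MeasureTheory.norm_setIntegral_le_of_norm_le_const hSfin hb
      calc ‖∫ x in S, ε * h x / ((g x)^2 + ε^2)‖ ≤ ε * C / m^2 * (volume S).toReal := this
        _ = C / m^2 * (volume S).toReal * ε := by ring
    · have h1 : Tendsto (fun ε : ℝ => C / m^2 * (volume S).toReal * ε) (nhds 0)
          (nhds (C / m^2 * (volume S).toReal * 0)) :=
        tendsto_const_nhds.mul tendsto_id
      rw [mul_zero] at h1
      exact h1.mono_left nhdsWithin_le_nhds
  -- combine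
  have hsum := tendsto_finset_sum (Finset.univ : Finset (Fin N)) (fun j _ => hloc j)
  have hfinal := hS0.add hsum
  rw [zero_add] at hfinal
  have e : ∑ j : Fin N, π * (h (y j) / |V' (y j)|) = π * ∑ j : Fin N, h (y j) / |V' (y j)| :=
    (Finset.mul_sum _ _ _).symm
  rw [e] at hfinal
  apply hfinal.congr'
  filter_upwards [self_mem_nhdsWithin] with ε hε
  exact (hdecomp ε hε).symm
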